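/- Let 1 < α ≤ 2, λ > 0, d ∈ ℝ − ℤ_{<0}, and w(j) = j^{d-1}e^{-λj} for j ≥ 1. Then lim_{n→∞} e^{λn} n^{-(d-1)} ∑_{j=1}^∞ ( w(j)^α − |w(j) − w(j+n)|^α ) = α ∑_{j=1}^∞ e^{-λαj} j^{(d-1)(α-1)}. -/

import Mathlib

open Filter Real Topology

/-- Asymptotic tempered kernel w(j) = j^{d-1} e^{-λj}. -/
noncomputable def temperedKernel (d lam : ℝ) (j : ℕ) : ℝ :=
  (j : ℝ) ^ (d - 1) * Real.exp (-lam * j)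

lemma kernel_rpow {x y z p : ℝ} (hx : 0 ≤ x) :
    (x ^ y * Real.exp z) ^ p = x ^ (y * p) * Real.exp (z * p) := by
  rw [Real.mul_rpow (Real.rpow_nonneg hx y) (Real.exp_pos z).le, ← Real.rpow_mul hx,
    Real.exp_mul]

lemma bern_ineq {a b α : ℝ} (ha : 0 < a) (hba : b ≤ a) (hα : 1 ≤ α) :
    a ^ α - (a - b) ^ α ≤ α * b * a ^ (α - 1) := by
  have hs : (-1 : ℝ) ≤ -(b / a) := by
    rw [neg_le_neg_iff]; exact div_le_one_of_le₀ hba ha.le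
  have hbern := one_add_mul_self_le_rpow_one_add hs hα
  have h1 : (0:ℝ) ≤ a ^ α := Real.rpow_nonneg ha.le α
  have h2 := mul_le_mul_of_nonneg_left hbern h1
  have h3 : a ^ α * (1 + -(b / a)) ^ α = (a - b) ^ α := by
    rw [← Real.mul_rpow ha.le
      (by rw [← sub_eq_add_neg, sub_nonneg]; exact div_le_one_of_le₀ hba ha.le)]
    congr 1
    field_simp
    ring
  have h4 : a ^ α * (1 + α * -(b / a)) = a ^ α - α * b * a ^ (α - 1) := by
    rw [Real.rpow_sub_one ha.ne']
    field_simp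
    ring
  rw [h3, h4] at h2
  linarith

lemma key_ineq {a b α : ℝ} (ha : 0 < a) (hb : 0 ≤ b) (hα : 1 ≤ α) :
    |a ^ α - |a - b| ^ α| ≤ b ^ α + α * b * a ^ (α - 1) := by
  have hb0 : (0:ℝ) ≤ b ^ α := Real.rpow_nonneg hb α
  have ht : (0:ℝ) ≤ α * b * a ^ (α - 1) := by positivity
  rcases le_or_gt b a with hba | hab
  · rw [abs_of_nonneg (by linarith : (0:ℝ) ≤ a - b)]
    have h1 : (a - b) ^ α ≤ a ^ α :=
      Real.rpow_le_rpow (by linarith) (by linarith) (by linarith)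
    rw [abs_of_nonneg (by linarith)]
    linarith [bern_ineq ha hba hα]
  · rw [abs_of_neg (by linarith : a - b < 0), neg_sub]
    have h1 : a ^ α ≤ b ^ α := Real.rpow_le_rpow ha.le hab.le (by linarith)
    have h2 : (b - a) ^ α ≤ b ^ α :=
      Real.rpow_le_rpow (by linarith) (by linarith) (by linarith)
    have h3 : (0:ℝ) ≤ a ^ α := Real.rpow_nonneg ha.le α
    have h4 : (0:ℝ) ≤ (b - a) ^ α := Real.rpow_nonneg (by linarith) α
    rw [abs_le]
    constructor <;> nlinarith

lemma aux_pointwise {α lam d m : ℝ} (hα1 : 1 < α) (hlam : 0 < lam) (hm : 1 ≤ m) :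
    Tendsto (fun n : ℕ => Real.exp (lam * n) * (n : ℝ) ^ (-(d - 1)) *
        ((m ^ (d-1) * Real.exp (-lam * m)) ^ α -
          |m ^ (d-1) * Real.exp (-lam * m) -
            (m + n) ^ (d-1) * Real.exp (-lam * (m + n))| ^ α))
      atTop (𝓝 (α * (Real.exp (-lam * α * m) * m ^ ((d-1) * (α-1))))) := by
  have hm0 : 0 < m := by linarith
  set a : ℝ := m ^ (d-1) * Real.exp (-lam * m) with ha_def
  have ha : 0 < a := by positivity
  set b : ℕ → ℝ := fun n => (m + n) ^ (d-1) * Real.exp (-lam * (m + n)) with hb_def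
  have hbpos : ∀ n, 0 < b n := fun n => by
    have : (0:ℝ) < m + n := by positivity
    positivity
  have htop : Tendsto (fun n : ℕ => m + (n : ℝ)) atTop atTop :=
    tendsto_atTop_add_const_left _ m tendsto_natCast_atTop_atTop
  have hb0 : Tendsto b atTop (𝓝 0) :=
    (tendsto_rpow_mul_exp_neg_mul_atTop_nhds_zero (d-1) lam hlam).comp htop
  set F : ℝ → ℝ := fun x => a ^ α - |a - x| ^ α with hF_def
  have hG : HasDerivAt (fun x : ℝ => a ^ α - (a - x) ^ α) (α * a ^ (α - 1)) 0 := by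
    have h1 : HasDerivAt (fun x : ℝ => a - x) (-1) 0 := (hasDerivAt_id 0).const_sub a
    have h2 : HasDerivAt (fun y : ℝ => y ^ α) (α * a ^ (α - 1)) (a - 0) := by
      simpa using Real.hasDerivAt_rpow_const (p := α) (Or.inl ha.ne')
    have h3 := h2.comp 0 h1
    have h4 := h3.const_sub (a ^ α)
    simpa using h4
  have hFG : F =ᶠ[𝓝 (0:ℝ)] fun x : ℝ => a ^ α - (a - x) ^ α := by
    filter_upwards [gt_mem_nhds ha] with x hx
    rw [hF_def]
    simp only
    rw [abs_of_pos (by linarith)]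
  have HD : HasDerivAt F (α * a ^ (α - 1)) 0 := hG.congr_of_eventuallyEq hFG
  have hslope : Tendsto (slope F 0) (𝓝[≠] (0:ℝ)) (𝓝 (α * a ^ (α - 1))) :=
    hasDerivAt_iff_tendsto_slope.mp HD
  have hbw : Tendsto b atTop (𝓝[≠] (0:ℝ)) :=
    tendsto_nhdsWithin_of_tendsto_nhds_of_eventually_within _ hb0
      (Eventually.of_forall fun n => (hbpos n).ne')
  have hq : Tendsto (fun n => slope F 0 (b n)) atTop (𝓝 (α * a ^ (α - 1))) :=
    hslope.comp hbw
  have hratio : Tendsto (fun n : ℕ => (m + n) / n) atTop (𝓝 1) := by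
    have h := (tendsto_const_div_atTop_nhds_zero_nat m).add (tendsto_const_nhds (x := (1:ℝ)))
    rw [zero_add] at h
    apply h.congr'
    filter_upwards [eventually_ge_atTop 1] with n hn
    have hn0 : ((n:ℝ)) ≠ 0 := Nat.cast_ne_zero.mpr (by omega)
    field_simp
  have hrpow : Tendsto (fun n : ℕ => ((m + n) / n) ^ (d-1)) atTop (𝓝 1) := by
    have h2 : ContinuousAt (fun x : ℝ => x ^ (d-1)) 1 :=
      Real.continuousAt_rpow_const 1 _ (Or.inl one_ne_zero)
    have := h2.tendsto.comp hratio
    rwa [Real.one_rpow] at this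
  have hcb : Tendsto (fun n : ℕ => Real.exp (lam * n) * (n : ℝ) ^ (-(d - 1)) * b n)
      atTop (𝓝 (Real.exp (-lam * m))) := by
    have h := hrpow.mul_const (Real.exp (-lam * m))
    rw [one_mul] at h
    apply h.congr'
    filter_upwards [eventually_ge_atTop 1] with n hn
    have hn0 : (0:ℝ) < (n:ℝ) := by exact_mod_cast Nat.pos_of_ne_zero (by omega)
    have e1 : Real.exp (lam * n) * Real.exp (-lam * (m + n)) = Real.exp (-lam * m) := by
      rw [← Real.exp_add]; ring_nf
    rw [div_eq_mul_inv, Real.mul_rpow (by positivity) (by positivity),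
      Real.inv_rpow hn0.le, ← Real.rpow_neg hn0.le]
    rw [hb_def]
    simp only
    linear_combination (-((m + (n:ℝ)) ^ (d-1) * ((n:ℝ) ^ (-(d-1))))) * e1
  have hmain := hcb.mul hq
  have hlim : Real.exp (-lam * m) * (α * a ^ (α - 1)) =
      α * (Real.exp (-lam * α * m) * m ^ ((d-1) * (α-1))) := by
    rw [ha_def, kernel_rpow hm0.le]
    have e2 : Real.exp (-lam * m) * Real.exp (-lam * m * (α - 1)) = Real.exp (-lam * α * m) := by
      rw [← Real.exp_add]; ring_nf
    linear_combination (α * m ^ ((d-1) * (α-1))) * e2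
  rw [hlim] at hmain
  apply hmain.congr
  intro n
  have hbne : b n ≠ 0 := (hbpos n).ne'
  have hF0 : F 0 = 0 := by
    rw [hF_def]; simp only [sub_zero]
    rw [abs_of_pos ha, sub_self]
  rw [slope_def_field, hF0, sub_zero, sub_zero, hF_def]
  simp only
  simp only [hb_def]
  field_simp

lemma aux_bound {α lam d m s K : ℝ} (hα1 : 1 < α) (hm : 1 ≤ m)
    (hs : s = |(d-1) * (α-1)|)
    (hK : ∀ k : ℕ, (k:ℝ) ^ s * Real.exp (-(lam * (α-1)) * k) ≤ K)
    {n : ℕ} (hn : 1 ≤ n) :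
    |Real.exp (lam * n) * (n:ℝ) ^ (-(d - 1)) *
      ((m ^ (d-1) * Real.exp (-lam * m)) ^ α -
        |m ^ (d-1) * Real.exp (-lam * m) - (m + n) ^ (d-1) * Real.exp (-lam * (m + n))| ^ α)|
    ≤ 2 ^ |d-1| * (2 ^ s * K + α) * m ^ (|d-1| + s) * Real.exp (-(lam * α) * m) := by
  have hm0 : (0:ℝ) < m := by linarith
  have hN0 : (0:ℝ) < (n:ℝ) := by exact_mod_cast Nat.pos_of_ne_zero (by omega)
  have hN1 : (1:ℝ) ≤ (n:ℝ) := by exact_mod_cast hn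
  set N : ℝ := (n:ℝ) with hN_def
  have hmN : (0:ℝ) < m + N := by linarith
  set a : ℝ := m ^ (d-1) * Real.exp (-lam * m) with ha_def
  set b : ℝ := (m + N) ^ (d-1) * Real.exp (-lam * (m + N)) with hb_def
  set c : ℝ := Real.exp (lam * N) * N ^ (-(d - 1)) with hc_def
  have ha : 0 < a := by positivity
  have hb0 : 0 < b := by positivity
  have hc : 0 ≤ c := by positivity
  set Q : ℝ := (m + N) / N with hQ_def
  have eQ : Q ^ (d-1) = (m + N) ^ (d-1) * N ^ (-(d-1)) := by
    rw [hQ_def, div_eq_mul_inv, Real.mul_rpow hmN.le (by positivity),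
      Real.inv_rpow hN0.le, ← Real.rpow_neg hN0.le]
  have hQ1 : (1:ℝ) ≤ Q := by rw [hQ_def, le_div_iff₀ hN0]; linarith
  have hQle : Q ≤ 2 * m := by rw [hQ_def, div_le_iff₀ hN0]; nlinarith
  have hQb : Q ^ (d-1) ≤ (2*m) ^ |d-1| :=
    le_trans (Real.rpow_le_rpow_of_exponent_le hQ1 (le_abs_self _))
      (Real.rpow_le_rpow (by linarith) hQle (abs_nonneg _))
  have hs0 : 0 ≤ s := hs ▸ abs_nonneg _
  have hse : (d-1) * (α-1) ≤ s := hs ▸ le_abs_self _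
  have hPb : (m + N) ^ ((d-1)*(α-1)) ≤ 2 ^ s * (m ^ s * N ^ s) := by
    calc (m + N) ^ ((d-1)*(α-1)) ≤ (m + N) ^ s :=
          Real.rpow_le_rpow_of_exponent_le (by linarith) hse
      _ ≤ (2 * (m * N)) ^ s := Real.rpow_le_rpow hmN.le (by nlinarith) hs0
      _ = 2 ^ s * (m ^ s * N ^ s) := by
          rw [Real.mul_rpow (by norm_num) (by positivity), Real.mul_rpow hm0.le hN0.le]
  have hMb : m ^ ((d-1)*(α-1)) ≤ m ^ s := Real.rpow_le_rpow_of_exponent_le hm hse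
  have hKn : N ^ s * Real.exp (-(lam * (α-1)) * N) ≤ K := hK n
  have eE1 : Real.exp (lam * N) * Real.exp (-lam * (m + N)) = Real.exp (-lam * m) := by
    rw [← Real.exp_add]; congr 1; ring
  have id1 : c * b = Q ^ (d-1) * Real.exp (-lam * m) := by
    rw [eQ, hc_def, hb_def]
    linear_combination ((m + N) ^ (d-1) * N ^ (-(d-1))) * eE1
  have eP : (m + N) ^ ((d-1) * α) = (m + N) ^ (d-1) * (m + N) ^ ((d-1)*(α-1)) := by
    rw [← Real.rpow_add hmN]; congr 1; ring
  have eE2 : Real.exp (lam * N) * Real.exp (-lam * (m + N) * α) =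
      Real.exp (-(lam * α) * m) * Real.exp (-(lam * (α-1)) * N) := by
    rw [← Real.exp_add, ← Real.exp_add]; congr 1; ring
  have id2 : c * b ^ α = Q ^ (d-1) * ((m + N) ^ ((d-1)*(α-1)) *
      Real.exp (-(lam * (α-1)) * N)) * Real.exp (-(lam * α) * m) := by
    rw [hb_def, kernel_rpow hmN.le, eP, eQ, hc_def]
    linear_combination (N ^ (-(d-1)) * (m + N) ^ (d-1) * (m + N) ^ ((d-1)*(α-1))) * eE2
  have haa : a ^ (α - 1) = m ^ ((d-1)*(α-1)) * Real.exp (-lam * m * (α-1)) := by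
    rw [ha_def, kernel_rpow hm0.le]
  have eE3 : Real.exp (-lam * m) * Real.exp (-lam * m * (α-1)) = Real.exp (-(lam * α) * m) := by
    rw [← Real.exp_add]; congr 1; ring
  have hkey := key_ineq (b := b) ha hb0.le hα1.le
  calc |c * (a ^ α - |a - b| ^ α)|
      = c * |a ^ α - |a - b| ^ α| := by rw [abs_mul, abs_of_nonneg hc]
    _ ≤ c * (b ^ α + α * b * a ^ (α - 1)) := mul_le_mul_of_nonneg_left hkey hc
    _ = (c * b ^ α) + α * (c * b) * a ^ (α - 1) := by ring
    _ = Q ^ (d-1) * ((m + N) ^ ((d-1)*(α-1)) * Real.exp (-(lam * (α-1)) * N)) *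
          Real.exp (-(lam * α) * m) +
        α * (Q ^ (d-1) * Real.exp (-lam * m)) *
          (m ^ ((d-1)*(α-1)) * Real.exp (-lam * m * (α-1))) := by
        rw [id1, id2, haa]
    _ ≤ (2*m) ^ |d-1| * ((2 ^ s * (m ^ s * N ^ s)) * Real.exp (-(lam * (α-1)) * N)) *
          Real.exp (-(lam * α) * m) +
        α * ((2*m) ^ |d-1| * Real.exp (-lam * m)) *
          (m ^ s * Real.exp (-lam * m * (α-1))) := by
        gcongr <;> positivity
    _ = (2*m) ^ |d-1| * 2 ^ s * m ^ s * Real.exp (-(lam * α) * m) *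
          (N ^ s * Real.exp (-(lam * (α-1)) * N)) +
        α * (2*m) ^ |d-1| * m ^ s *
          (Real.exp (-lam * m) * Real.exp (-lam * m * (α-1))) := by ring
    _ ≤ (2*m) ^ |d-1| * 2 ^ s * m ^ s * Real.exp (-(lam * α) * m) * K +
        α * (2*m) ^ |d-1| * m ^ s *
          (Real.exp (-lam * m) * Real.exp (-lam * m * (α-1))) := by
        gcongr
    _ = 2 ^ |d-1| * (2 ^ s * K + α) * m ^ (|d-1| + s) * Real.exp (-(lam * α) * m) := by
        rw [eE3, Real.mul_rpow (by norm_num) hm0.le, Real.rpow_add hm0]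
        ring

lemma aux_summable {C t la : ℝ} (hC : 0 ≤ C) (hla : 0 < la) :
    Summable (fun j : ℕ => C * ((j:ℝ)+1) ^ t * Real.exp (-la * ((j:ℝ)+1))) := by
  set r : ℝ := Real.exp (-la) with hr_def
  have hr0 : 0 < r := Real.exp_pos _
  have hr1 : r < 1 := by
    rw [hr_def, show (1:ℝ) = Real.exp 0 by simp]
    exact Real.exp_lt_exp.mpr (by linarith)
  set M : ℕ := ⌈t⌉₊ with hM_def
  have base : Summable (fun k : ℕ => (k:ℝ) ^ M * r ^ k) :=
    summable_pow_mul_geometric_of_norm_lt_one M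
      (by rw [Real.norm_eq_abs, abs_of_pos hr0]; exact hr1)
  have shifted : Summable (fun j : ℕ => ((j+1:ℕ):ℝ) ^ M * r ^ (j+1)) :=
    base.comp_injective (add_left_injective 1)
  refine ((shifted.mul_left C).of_nonneg_of_le (fun j => ?_) fun j => ?_)
  · have : (0:ℝ) < (j:ℝ)+1 := by positivity
    positivity
  · have hm : (1:ℝ) ≤ (j:ℝ)+1 := by
      have : (0:ℝ) ≤ (j:ℝ) := Nat.cast_nonneg j
      linarith
    have h1 : ((j:ℝ)+1) ^ t ≤ ((j:ℝ)+1) ^ (M:ℝ) :=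
      Real.rpow_le_rpow_of_exponent_le hm (Nat.le_ceil t)
    have h1' : ((j:ℝ)+1) ^ t ≤ ((j:ℝ)+1) ^ M := by
      rwa [Real.rpow_natCast] at h1
    have h2 : Real.exp (-la * ((j:ℝ)+1)) = r ^ (j+1) := by
      rw [hr_def, ← Real.rpow_natCast (Real.exp (-la)) (j+1), ← Real.exp_mul]
      congr 1
      push_cast
      ring
    calc C * ((j:ℝ)+1) ^ t * Real.exp (-la * ((j:ℝ)+1))
        ≤ C * ((j:ℝ)+1) ^ M * Real.exp (-la * ((j:ℝ)+1)) := by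
          gcongr
      _ = C * (((j+1:ℕ):ℝ) ^ M * r ^ (j+1)) := by
          rw [h2]; push_cast; ring

theorem difference_sum_asymptotics_alpha_gt_one (α lam d : ℝ)
    (hα1 : 1 < α) (hα2 : α ≤ 2) (hlam : 0 < lam)
    (hd : ∀ n : ℕ, d ≠ -((n : ℝ) + 1)) :
    Tendsto (fun n : ℕ =>
        Real.exp (lam * n) * (n : ℝ) ^ (-(d - 1)) *
          ∑' j : ℕ,
            ((temperedKernel d lam (j + 1)) ^ α -
              |temperedKernel d lam (j + 1) - temperedKernel d lam (j + 1 + n)| ^ α))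
      atTop
      (nhds (α * ∑' j : ℕ,
        Real.exp (-lam * α * ((j : ℝ) + 1)) * ((j : ℝ) + 1) ^ ((d - 1) * (α - 1)))) := by
  set s : ℝ := |(d-1) * (α-1)| with hs_def
  have hc' : 0 < lam * (α - 1) := by nlinarith
  obtain ⟨K, hK⟩ : ∃ K, ∀ k : ℕ, (k:ℝ) ^ s * Real.exp (-(lam * (α-1)) * k) ≤ K := by
    have h := (tendsto_rpow_mul_exp_neg_mul_atTop_nhds_zero s (lam * (α-1)) hc').comp
      (tendsto_natCast_atTop_atTop (R := ℝ))
    obtain ⟨K, hKK⟩ := h.isBoundedUnder_le.bddAbove_range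
    exact ⟨K, fun k => hKK ⟨k, rfl⟩⟩
  have hK0 : 0 ≤ K := le_trans (by positivity) (hK 1)
  have hC0 : 0 ≤ 2 ^ |d-1| * (2 ^ s * K + α) := by
    have h1 : (0:ℝ) ≤ 2 ^ s * K + α :=
      add_nonneg (mul_nonneg (Real.rpow_nonneg (by norm_num) s) hK0) (by linarith)
    exact mul_nonneg (Real.rpow_nonneg (by norm_num) _) h1
  have hgoal : (α * ∑' j : ℕ, Real.exp (-lam * α * ((j:ℝ)+1)) * ((j:ℝ)+1) ^ ((d-1) * (α-1)))
      = ∑' j : ℕ, α * (Real.exp (-lam * α * ((j:ℝ)+1)) * ((j:ℝ)+1) ^ ((d-1) * (α-1))) :=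
    tsum_mul_left.symm
  rw [hgoal]
  refine Tendsto.congr (fun n => tsum_mul_left) ?_
  refine tendsto_tsum_of_dominated_convergence
    (bound := fun j : ℕ => 2 ^ |d-1| * (2 ^ s * K + α) * ((j:ℝ)+1) ^ (|d-1| + s) *
      Real.exp (-(lam * α) * ((j:ℝ)+1))) ?_ ?_ ?_
  · exact aux_summable hC0 (by positivity)
  · intro j
    have hm : (1:ℝ) ≤ (j:ℝ)+1 := by
      have : (0:ℝ) ≤ (j:ℝ) := Nat.cast_nonneg j
      linarith
    have e1 : temperedKernel d lam (j+1) =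
        ((j:ℝ)+1) ^ (d-1) * Real.exp (-lam * ((j:ℝ)+1)) := by
      simp only [temperedKernel]
      push_cast
      ring_nf
    have e2 : ∀ n : ℕ, temperedKernel d lam (j+1+n) =
        (((j:ℝ)+1) + n) ^ (d-1) * Real.exp (-lam * (((j:ℝ)+1) + n)) := by
      intro n
      simp only [temperedKernel]
      push_cast
      ring_nf
    refine (aux_pointwise (d := d) hα1 hlam hm).congr fun n => ?_
    rw [e1, e2 n]
  · filter_upwards [eventually_ge_atTop 1] with n hn
    intro j
    have hm : (1:ℝ) ≤ (j:ℝ)+1 := by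
      have : (0:ℝ) ≤ (j:ℝ) := Nat.cast_nonneg j
      linarith
    have e1 : temperedKernel d lam (j+1) =
        ((j:ℝ)+1) ^ (d-1) * Real.exp (-lam * ((j:ℝ)+1)) := by
      simp only [temperedKernel]
      push_cast
      ring_nf
    have e2 : temperedKernel d lam (j+1+n) =
        (((j:ℝ)+1) + n) ^ (d-1) * Real.exp (-lam * (((j:ℝ)+1) + n)) := by
      simp only [temperedKernel]
      push_cast
      ring_nf
    rw [Real.norm_eq_abs, e1, e2]
    exact aux_bound hα1 hm hs_def hK hn
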